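/- In the complete graph K_n with n ≥ 2, the minimal local sets are exactly the two-element subsets of vertices. -/

import Mathlib

open scoped Classical

/-- The odd neighborhood of a set `D` of vertices: the vertices having an odd
number of neighbors in `D`. -/
noncomputable def oddN {V : Type*} [Fintype V] (G : SimpleGraph V) (D : Finset V) :
    Finset V :=
  Finset.univ.filter fun v => Odd (D.filter fun d => G.Adj v d).card

/-- A local set of `G`: a set of the form `D ∪ Odd(D)` for some nonempty `D`. -/
noncomputable def IsLocalSet {V : Type*} [Fintype V] (G : SimpleGraph V)
    (L : Finset V) : Prop :=
  ∃ D : Finset V, D.Nonempty ∧ L = D ∪ oddN G D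

/-- A minimal local set: a local set containing no other local set. -/
noncomputable def IsMinimalLocalSet {V : Type*} [Fintype V] (G : SimpleGraph V)
    (L : Finset V) : Prop :=
  IsLocalSet G L ∧ ∀ L' : Finset V, IsLocalSet G L' → L' ⊆ L → L' = L

lemma union_norm {α : Type*} (i j : DecidableEq α) (s t : Finset α) :
    @Union.union _ (@Finset.instUnion α i) s t = @Union.union _ (@Finset.instUnion α j) s t := by
  congr!

lemma filter_norm {α : Type*} (p : α → Prop) (i j : DecidablePred p) (s : Finset α) :
    @Finset.filter α p i s = @Finset.filter α p j s := by
  congr!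

lemma mem_oddN_top {n : ℕ} (v : Fin n) (D : Finset (Fin n)) :
    v ∈ oddN (⊤ : SimpleGraph (Fin n)) D ↔ Odd (D.erase v).card := by
  simp only [oddN, Finset.mem_filter, Finset.mem_univ, true_and]
  rw [filter_norm _ _ (fun d => (SimpleGraph.Top.adjDecidable (Fin n)) v d)]
  have h : (D.filter fun d => (⊤ : SimpleGraph (Fin n)).Adj v d) = D.erase v := by
    ext x
    simp [Finset.mem_filter, Finset.mem_erase, and_comm, ne_comm]
  rw [h]

lemma pair_local {n : ℕ} (a b : Fin n) (hab : a ≠ b) :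
    IsLocalSet (⊤ : SimpleGraph (Fin n)) {a, b} := by
  refine ⟨{a, b}, ⟨a, by simp⟩, ?_⟩
  rw [union_norm _ (instDecidableEqFin n)]
  have hsub : oddN (⊤ : SimpleGraph (Fin n)) {a, b} ⊆ {a, b} := by
    intro v hv
    rw [mem_oddN_top] at hv
    by_contra hvm
    simp only [Finset.mem_insert, Finset.mem_singleton, not_or] at hvm
    have he : ({a, b} : Finset (Fin n)).erase v = {a, b} := by
      rw [Finset.erase_eq_self]
      simp [hvm.1, hvm.2, Ne.symm]
    rw [he, Finset.card_pair hab] at hv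
    exact (Nat.not_even_iff_odd.mpr hv) (by norm_num)
  exact (Finset.union_eq_left.mpr hsub).symm

lemma local_card {n : ℕ} (hn : 2 ≤ n) (L : Finset (Fin n))
    (h : IsLocalSet (⊤ : SimpleGraph (Fin n)) L) : 2 ≤ L.card := by
  obtain ⟨D, ⟨d, hd⟩, rfl⟩ := h
  rw [union_norm _ (instDecidableEqFin n)]
  rcases lt_or_ge 1 D.card with h2 | h1
  · exact le_trans h2 (Finset.card_le_card Finset.subset_union_left)
  · have hD : D = {d} := by
      apply Finset.eq_singleton_iff_unique_mem.mpr
      refine ⟨hd, fun x hx => ?_⟩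
      by_contra hx'
      have := Finset.one_lt_card.mpr ⟨x, hx, d, hd, hx'⟩
      omega
    obtain ⟨v, hv⟩ : ∃ v : Fin n, v ≠ d := by
      have : 1 < Fintype.card (Fin n) := by simp; omega
      exact Fintype.exists_ne_of_one_lt_card this d
    refine Finset.one_lt_card.mpr ⟨d, Finset.mem_union_left _ hd, v, ?_, hv.symm⟩
    apply Finset.mem_union_right
    rw [mem_oddN_top, hD, Finset.erase_eq_self.mpr (by simp [hv])]
    simp

/-- In the complete graph `K_n` with `n ≥ 2`, the minimal local sets are exactly
the two-element subsets of vertices. -/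
theorem stmt_12 (n : ℕ) (hn : 2 ≤ n) (L : Finset (Fin n)) :
    IsMinimalLocalSet (⊤ : SimpleGraph (Fin n)) L ↔ L.card = 2 := by
  constructor
  · rintro ⟨hL, hmin⟩
    have h2 := local_card hn L hL
    obtain ⟨a, ha, b, hb, hab⟩ := Finset.one_lt_card.mp h2
    have hsub : ({a, b} : Finset (Fin n)) ⊆ L := by
      intro x hx
      rcases Finset.mem_insert.mp hx with rfl | hx
      · exact ha
      · exact Finset.mem_singleton.mp hx ▸ hb
    have := hmin {a, b} (pair_local a b hab) hsub
    rw [← this, Finset.card_pair hab]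
  · intro hcard
    obtain ⟨a, b, hab, rfl⟩ := Finset.card_eq_two.mp hcard
    refine ⟨pair_local a b hab, fun L' hL' hsub => ?_⟩
    exact Finset.eq_of_subset_of_card_le hsub
      (by rw [Finset.card_pair hab]; exact local_card hn L' hL')
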